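/- Let $x:[0,\infty)\to\mathbb{R}^n$ solve $\dot x_i=\sum_j a_{ij}\mathrm{sign}(x_j-x_i)|x_j-x_i|^\alpha$ with $A$ symmetric nonnegative, zero diagonal, connected graph, $0<\alpha<1$. Let $\kappa=\frac1n\sum_i x_i(0)$, $\delta(t)=x(t)-\kappa\mathbf{1}$, $V_2(t)=\tfrac12\delta(t)^T\delta(t)$, and $B=[a_{ij}^{2/(1+\alpha)}]$. Then $\frac{dV_2}{dt}(t) \le -2^{\alpha}\lambda_2(L_B)^{\frac{1+\alpha}{2}} V_2(t)^{\frac{1+\alpha}{2}}$ whenever $V_2(t)>0$, and $V_2(t)=0$ for all $t\ge t_2=\frac{2^{1-\alpha}V_2(0)^{\frac{1-\alpha}{2}}}{(1-\alpha)\lambda_2(L_B)^{\frac{1+\alpha}{2}}}$; thus every $x_i(t)$ equals the initial average $\kappa$ for $t\ge t_2$. -/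

import Mathlib

open Finset Matrix

def graphLaplacian {n : ℕ} (A : Matrix (Fin n) (Fin n) ℝ) : Matrix (Fin n) (Fin n) ℝ :=
  fun i j => if i = j then ∑ k ∈ univ.erase i, A i k else -A i j

def WeightConnected {n : ℕ} (A : Matrix (Fin n) (Fin n) ℝ) : Prop :=
  ∀ i j : Fin n, Relation.ReflTransGen (fun a b => 0 < A a b) i j

private lemma aux_rpow_add_le {x y p : ℝ} (hx : 0 ≤ x) (hy : 0 ≤ y) (hp : 0 ≤ p) (hp1 : p ≤ 1) :
    (x + y) ^ p ≤ x ^ p + y ^ p := by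
  have h := NNReal.rpow_add_le_add_rpow (⟨x, hx⟩ : NNReal) ⟨y, hy⟩ hp hp1
  have h2 := NNReal.coe_le_coe.2 h
  push_cast at h2
  convert h2 using 2 <;> rfl

private lemma aux_sum_rpow {ι : Type*} (s : Finset ι) (f : ι → ℝ) (hf : ∀ i ∈ s, 0 ≤ f i)
    {p : ℝ} (hp0 : 0 < p) (hp1 : p ≤ 1) :
    (∑ i ∈ s, f i) ^ p ≤ ∑ i ∈ s, f i ^ p := by
  induction s using Finset.cons_induction with
  | empty => simp [Real.zero_rpow hp0.ne']
  | cons a s ha ih =>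
    rw [Finset.sum_cons, Finset.sum_cons]
    have h1 : 0 ≤ f a := hf a (Finset.mem_cons_self _ _)
    have h2 : ∀ i ∈ s, 0 ≤ f i := fun i hi => hf i (Finset.mem_cons_of_mem hi)
    calc (f a + ∑ i ∈ s, f i) ^ p ≤ f a ^ p + (∑ i ∈ s, f i) ^ p :=
        aux_rpow_add_le h1 (Finset.sum_nonneg h2) hp0.le hp1
      _ ≤ _ := by linarith [ih h2]

private lemma aux_sign_mul_abs (u : ℝ) : u * Real.sign u = |u| := by
  rcases lt_trichotomy u 0 with h | h | h
  · rw [Real.sign_of_neg h, abs_of_neg h]; ring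
  · simp [h]
  · rw [Real.sign_of_pos h, abs_of_pos h]; ring

private lemma lap_row {n : ℕ} (B : Matrix (Fin n) (Fin n) ℝ) (hd : ∀ i, B i i = 0)
    (v : Fin n → ℝ) (i : Fin n) :
    (graphLaplacian B *ᵥ v) i = (∑ k, B i k) * v i - ∑ j, B i j * v j := by
  simp only [Matrix.mulVec, dotProduct]
  rw [← Finset.add_sum_erase _ (fun j => graphLaplacian B i j * v j) (Finset.mem_univ i),
      ← Finset.add_sum_erase _ (fun k => B i k) (Finset.mem_univ i),
      ← Finset.add_sum_erase _ (fun j => B i j * v j) (Finset.mem_univ i)]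
  have h1 : ∀ j ∈ Finset.univ.erase i, graphLaplacian B i j * v j = -(B i j * v j) := by
    intro j hj
    have hij : ¬ i = j := fun h => (Finset.mem_erase.1 hj).1 h.symm
    simp [graphLaplacian, hij]
  rw [Finset.sum_congr rfl h1]
  simp only [graphLaplacian, eq_self_iff_true, if_true, hd i]
  rw [Finset.sum_neg_distrib]
  ring

private lemma lap_quad {n : ℕ} (B : Matrix (Fin n) (Fin n) ℝ)
    (hs : ∀ i j, B j i = B i j) (hd : ∀ i, B i i = 0) (v : Fin n → ℝ) :
    ∑ i, ∑ j, B i j * (v j - v i) ^ 2 = 2 * (v ⬝ᵥ (graphLaplacian B *ᵥ v)) := by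
  have hR : v ⬝ᵥ (graphLaplacian B *ᵥ v)
      = (∑ i, ∑ j, B i j * v i ^ 2) - ∑ i, ∑ j, B i j * (v i * v j) := by
    simp only [dotProduct, lap_row B hd v]
    rw [← Finset.sum_sub_distrib]
    apply Finset.sum_congr rfl
    intro i _
    rw [Finset.sum_mul, mul_sub, Finset.mul_sum, Finset.mul_sum, ← Finset.sum_sub_distrib, ← Finset.sum_sub_distrib]
    apply Finset.sum_congr rfl
    intro j _
    ring
  have hswap : ∑ i, ∑ j, B i j * v j ^ 2 = ∑ i, ∑ j, B i j * v i ^ 2 := by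
    rw [Finset.sum_comm]
    exact Finset.sum_congr rfl fun i _ => Finset.sum_congr rfl fun j _ => by rw [hs]
  calc ∑ i, ∑ j, B i j * (v j - v i) ^ 2
      = (∑ i, ∑ j, B i j * v j ^ 2) + (∑ i, ∑ j, B i j * v i ^ 2)
        - 2 * ∑ i, ∑ j, B i j * (v i * v j) := by
        simp only [← Finset.sum_add_distrib, ← Finset.sum_sub_distrib, Finset.mul_sum]
        exact Finset.sum_congr rfl fun i _ => Finset.sum_congr rfl fun j _ => by ring
    _ = 2 * (v ⬝ᵥ (graphLaplacian B *ᵥ v)) := by rw [hswap, hR]; ring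

private lemma fiedler {n : ℕ} (hn1 : 1 < n) (B : Matrix (Fin n) (Fin n) ℝ)
    (μ : Fin n → ℝ) (T : Matrix (Fin n) (Fin n) ℝ)
    (hT : Tᵀ * T = 1)
    (hdiagz : graphLaplacian B = Tᵀ * Matrix.diagonal μ * T)
    (hmono : Monotone μ) (hmu2 : 0 < μ ⟨1, hn1⟩)
    (v : Fin n → ℝ) (hv : ∑ i, v i = 0) :
    μ ⟨1, hn1⟩ * (∑ i, v i ^ 2) ≤ v ⬝ᵥ (graphLaplacian B *ᵥ v) := by
  have hn0 : 0 < n := by omega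
  set i0 : Fin n := ⟨0, hn0⟩ with hi0
  set i1 : Fin n := ⟨1, hn1⟩ with hi1
  have hTT : T * Tᵀ = 1 := mul_eq_one_comm.mp hT
  have hTv : ∀ a : Fin n → ℝ, T *ᵥ a = a ᵥ* Tᵀ := by
    intro a
    have h := Matrix.mulVec_transpose Tᵀ a
    rwa [Matrix.transpose_transpose] at h
  have hdot : ∀ a b : Fin n → ℝ, (T *ᵥ a) ⬝ᵥ (T *ᵥ b) = a ⬝ᵥ b := by
    intro a b
    rw [dotProduct_mulVec, hTv a, Matrix.vecMul_vecMul, hT, Matrix.vecMul_one]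
  set e := T *ᵥ (fun _ => (1:ℝ)) with he
  set y := T *ᵥ v with hy
  have hone : Tᵀ *ᵥ e = fun _ => (1:ℝ) := by
    rw [he, Matrix.mulVec_mulVec, hT, Matrix.one_mulVec]
  have hL1 : graphLaplacian B *ᵥ (fun _ => (1:ℝ)) = 0 := by
    funext i
    simp only [Matrix.mulVec, dotProduct, mul_one, Pi.zero_apply]
    rw [← Finset.add_sum_erase _ (fun j => graphLaplacian B i j) (Finset.mem_univ i)]
    have h1 : ∀ j ∈ Finset.univ.erase i, graphLaplacian B i j = -B i j := by
      intro j hj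
      have hij : ¬ i = j := fun h => (Finset.mem_erase.1 hj).1 h.symm
      simp [graphLaplacian, hij]
    rw [Finset.sum_congr rfl h1, Finset.sum_neg_distrib]
    simp [graphLaplacian]
  have hDe : ∀ k, μ k * e k = 0 := by
    have h1 : Tᵀ *ᵥ (Matrix.diagonal μ *ᵥ e) = 0 := by
      have h := hL1
      rw [hdiagz, ← Matrix.mulVec_mulVec, ← Matrix.mulVec_mulVec] at h
      exact h
    have h2 : Matrix.diagonal μ *ᵥ e = 0 := by
      have h3 := congrArg (fun w => T *ᵥ w) h1
      simp only [Matrix.mulVec_mulVec, Matrix.mulVec_zero] at h3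
      rw [← Matrix.mul_assoc, hTT, Matrix.one_mul] at h3
      exact h3
    intro k
    have h4 := congrFun h2 k
    simpa [Matrix.mulVec_diagonal] using h4
  have hle : ∀ k : Fin n, k ≠ i0 → i1 ≤ k := by
    intro k hk
    have h : 1 ≤ k.val := by
      rcases Nat.eq_zero_or_pos k.val with h | h
      · exact absurd (Fin.ext h) hk
      · exact h
    exact h
  have hek : ∀ k, k ≠ i0 → e k = 0 := by
    intro k hk
    have hμk : 0 < μ k := lt_of_lt_of_le hmu2 (hmono (hle k hk))
    exact (mul_eq_zero.1 (hDe k)).resolve_left hμk.ne'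
  have hee : e ⬝ᵥ e = (n : ℝ) := by
    rw [he, hdot]
    simp [dotProduct]
  have he0 : e i0 ≠ 0 := by
    intro h
    have hz : e ⬝ᵥ e = 0 := by
      simp only [dotProduct]
      apply Finset.sum_eq_zero
      intro k _
      by_cases hk : k = i0
      · subst hk; simp [h]
      · simp [hek k hk]
    rw [hee] at hz
    have : (0:ℝ) < n := by exact_mod_cast hn0
    linarith
  have hy0 : y i0 = 0 := by
    have h1 : v ⬝ᵥ (fun _ => (1:ℝ)) = 0 := by simpa [dotProduct] using hv
    rw [← hone, dotProduct_mulVec, Matrix.vecMul_transpose, ← hy] at h1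
    have h2 : y ⬝ᵥ e = y i0 * e i0 := by
      simp only [dotProduct]
      rw [← Finset.add_sum_erase _ (fun k => y k * e k) (Finset.mem_univ i0),
        Finset.sum_eq_zero (fun k hk => by rw [hek k (Finset.mem_erase.1 hk).1, mul_zero]), add_zero]
    rw [h2] at h1
    exact (mul_eq_zero.1 h1).resolve_right he0
  have hquad : v ⬝ᵥ (graphLaplacian B *ᵥ v) = ∑ k, μ k * y k ^ 2 := by
    rw [hdiagz, ← Matrix.mulVec_mulVec, ← Matrix.mulVec_mulVec, dotProduct_mulVec,
      Matrix.vecMul_transpose, ← hy]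
    simp only [dotProduct, Matrix.mulVec_diagonal]
    exact Finset.sum_congr rfl fun k _ => by ring
  have hyy : ∑ k, y k ^ 2 = ∑ i, v i ^ 2 := by
    have h := hdot v v
    rw [← hy] at h
    simpa [dotProduct, pow_two] using h
  rw [hquad, ← hyy, Finset.mul_sum]
  apply Finset.sum_le_sum
  intro k _
  by_cases hk : k = i0
  · subst hk; simp [hy0]
  · have hμk : μ i1 ≤ μ k := hmono (hle k hk)
    have := sq_nonneg (y k)
    nlinarith

theorem finite_time_average_agreement_protocol_two {n : ℕ} (hn : 2 ≤ n)
    (A : Matrix (Fin n) (Fin n) ℝ)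
    (hsymm : A.IsSymm) (hnonneg : ∀ i j, 0 ≤ A i j) (hdiag : ∀ i, A i i = 0)
    (hconn : WeightConnected A)
    (α : ℝ) (hα0 : 0 < α) (hα1 : α < 1)
    (B : Matrix (Fin n) (Fin n) ℝ) (hB : ∀ i j, B i j = A i j ^ (2 / (1 + α)))
    -- `μ` lists the eigenvalues of the Laplacian of `B` in increasing order, so that
    -- `μ ⟨1, _⟩` is the second smallest eigenvalue `λ₂(L_B)`:
    (μ : Fin n → ℝ) (T : Matrix (Fin n) (Fin n) ℝ)
    (hT : Tᵀ * T = 1)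
    (hdiagz : graphLaplacian B = Tᵀ * Matrix.diagonal μ * T)
    (hmono : Monotone μ)
    (hμ0 : μ ⟨0, by omega⟩ = 0)
    (hmu2 : 0 < μ ⟨1, by omega⟩)
    (x : ℝ → Fin n → ℝ)
    (hode : ∀ (t : ℝ) (i : Fin n), HasDerivAt (fun s => x s i)
      (∑ j, A i j * Real.sign (x t j - x t i) * |x t j - x t i| ^ α) t)
    (κ : ℝ) (hκ : κ = (∑ i, x 0 i) / n)
    (V2 : ℝ → ℝ)
    (hV2 : V2 = fun t => (1 / 2) * ∑ i, (x t i - κ) ^ 2) :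
    (∀ t : ℝ, 0 < V2 t →
        deriv V2 t ≤ -(2 ^ α * μ ⟨1, by omega⟩ ^ ((1 + α) / 2)) * V2 t ^ ((1 + α) / 2)) ∧
      (∀ t : ℝ,
        2 ^ (1 - α) * V2 0 ^ ((1 - α) / 2) / ((1 - α) * μ ⟨1, by omega⟩ ^ ((1 + α) / 2)) ≤ t →
        V2 t = 0 ∧ ∀ i : Fin n, x t i = κ) := by
  have hn1 : 1 < n := by omega
  have h1α : (0:ℝ) < 1 + α := by linarith
  set lam : ℝ := μ ⟨1, hn1⟩ with hlam
  have hlampos : 0 < lam := hmu2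
  set p : ℝ := (1 + α) / 2 with hpdef
  set q : ℝ := (1 - α) / 2 with hqdef
  have hp0 : 0 < p := by rw [hpdef]; linarith
  have hp1 : p ≤ 1 := by rw [hpdef]; linarith
  have hq0 : 0 < q := by rw [hqdef]; linarith
  -- antisymmetry of the interaction term
  have hg : ∀ (t : ℝ) (i j : Fin n),
      A j i * Real.sign (x t i - x t j) * |x t i - x t j| ^ α
        = -(A i j * Real.sign (x t j - x t i) * |x t j - x t i| ^ α) := by
    intro t i j
    rw [hsymm.apply i j, show x t i - x t j = -(x t j - x t i) by ring, Real.sign_neg, abs_neg]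
    ring
  -- invariance of the sum
  have hsumconst : ∀ t : ℝ, ∑ i, x t i = ∑ i, x 0 i := by
    have hder : ∀ t : ℝ, HasDerivAt (fun s => ∑ i, x s i) 0 t := by
      intro t
      have h := HasDerivAt.fun_sum (fun i (_ : i ∈ Finset.univ) => hode t i)
      have hz : ∑ i, ∑ j, A i j * Real.sign (x t j - x t i) * |x t j - x t i| ^ α = 0 := by
        have hswap : ∑ i, ∑ j, A i j * Real.sign (x t j - x t i) * |x t j - x t i| ^ α
            = ∑ i, ∑ j, A j i * Real.sign (x t i - x t j) * |x t i - x t j| ^ α :=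
          Finset.sum_comm
        have hneg : ∑ i, ∑ j, A j i * Real.sign (x t i - x t j) * |x t i - x t j| ^ α
            = -∑ i, ∑ j, A i j * Real.sign (x t j - x t i) * |x t j - x t i| ^ α := by
          rw [← Finset.sum_neg_distrib]
          apply Finset.sum_congr rfl
          intro i _
          rw [← Finset.sum_neg_distrib]
          exact Finset.sum_congr rfl fun j _ => hg t i j
        linarith [hswap, hneg]
      rwa [hz] at h
    intro t
    exact is_const_of_deriv_eq_zero (fun s => (hder s).differentiableAt)
      (fun s => (hder s).deriv) t 0
  have hncast : (0:ℝ) < (n:ℝ) := by exact_mod_cast (by omega : 0 < n)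
  have hδ0 : ∀ t : ℝ, ∑ i, (x t i - κ) = 0 := by
    intro t
    rw [Finset.sum_sub_distrib, hsumconst t, hκ, Finset.sum_const, Finset.card_univ,
      Fintype.card_fin, nsmul_eq_mul]
    field_simp
    ring
  -- derivative of V2
  have hVd : ∀ t : ℝ, HasDerivAt V2
      (∑ i, (x t i - κ) * ∑ j, A i j * Real.sign (x t j - x t i) * |x t j - x t i| ^ α) t := by
    intro t
    rw [hV2]
    have h1 : HasDerivAt (fun s => ∑ i, (x s i - κ) ^ 2)
        (∑ i, (2:ℕ) * (x t i - κ) ^ 1 *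
          ∑ j, A i j * Real.sign (x t j - x t i) * |x t j - x t i| ^ α) t := by
      apply HasDerivAt.fun_sum
      intro i _
      exact ((hode t i).sub_const κ).pow 2
    have h4 := h1.const_mul (1/2 : ℝ)
    refine h4.congr_deriv ?_
    rw [Finset.mul_sum]
    apply Finset.sum_congr rfl
    intro i _
    push_cast
    ring
  -- symmetrization identity
  have hsymmId : ∀ t : ℝ,
      ∑ i, (x t i - κ) * ∑ j, A i j * Real.sign (x t j - x t i) * |x t j - x t i| ^ α
        = -(1/2) * ∑ i, ∑ j, A i j * |x t j - x t i| ^ (1 + α) := by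
    intro t
    have key : ∀ i j : Fin n,
        (x t i - κ) * (A i j * Real.sign (x t j - x t i) * |x t j - x t i| ^ α)
          + (x t j - κ) * (A j i * Real.sign (x t i - x t j) * |x t i - x t j| ^ α)
        = -(A i j * |x t j - x t i| ^ (1 + α)) := by
      intro i j
      rw [hg t i j]
      have hpow : |x t j - x t i| ^ (1 + α) = |x t j - x t i| * |x t j - x t i| ^ α := by
        rw [Real.rpow_add' (abs_nonneg _) (by linarith), Real.rpow_one]
      rw [hpow]
      have habs := aux_sign_mul_abs (x t j - x t i)
      linear_combination (-(A i j) * |x t j - x t i| ^ α) * habs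
    have h2 : (2:ℝ) * ∑ i, ∑ j,
        (x t i - κ) * (A i j * Real.sign (x t j - x t i) * |x t j - x t i| ^ α)
        = ∑ i, ∑ j, -(A i j * |x t j - x t i| ^ (1 + α)) := by
      rw [two_mul]
      nth_rewrite 2 [Finset.sum_comm]
      rw [← Finset.sum_add_distrib]
      apply Finset.sum_congr rfl
      intro i _
      rw [← Finset.sum_add_distrib]
      exact Finset.sum_congr rfl fun j _ => key i j
    have h3 : ∑ i, ∑ j, -(A i j * |x t j - x t i| ^ (1 + α))
        = -∑ i, ∑ j, A i j * |x t j - x t i| ^ (1 + α) := by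
      rw [← Finset.sum_neg_distrib]
      exact Finset.sum_congr rfl fun i _ => Finset.sum_neg_distrib _
    have h4 : ∑ i, (x t i - κ) * ∑ j, A i j * Real.sign (x t j - x t i) * |x t j - x t i| ^ α
        = ∑ i, ∑ j, (x t i - κ) * (A i j * Real.sign (x t j - x t i) * |x t j - x t i| ^ α) := by
      exact Finset.sum_congr rfl fun i _ => Finset.mul_sum _ _ _
    rw [h4]
    linarith [h2, h3]
  -- properties of B
  have hBsymm : ∀ i j, B j i = B i j := fun i j => by rw [hB, hB, hsymm.apply i j]
  have hBnn : ∀ i j, 0 ≤ B i j := fun i j => by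
    rw [hB]; exact Real.rpow_nonneg (hnonneg i j) _
  have hBdiag : ∀ i, B i i = 0 := fun i => by
    rw [hB, hdiag, Real.zero_rpow (by positivity : (0:ℝ) < 2/(1+α)).ne']
  -- main differential inequality (valid for every t)
  have hmain : ∀ t : ℝ, deriv V2 t ≤ -(2 ^ α * lam ^ p) * V2 t ^ p := by
    intro t
    rw [(hVd t).deriv, hsymmId t]
    have hne1α : (1:ℝ) + α ≠ 0 := h1α.ne'
    have hq1 : ∀ i j : Fin n,
        (B i j * (x t j - x t i) ^ 2) ^ p = A i j * |x t j - x t i| ^ (1 + α) := by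
      intro i j
      rw [Real.mul_rpow (hBnn i j) (sq_nonneg _)]
      have h1 : (B i j) ^ p = A i j := by
        rw [hB, ← Real.rpow_mul (hnonneg i j),
          show 2 / (1 + α) * p = 1 by rw [hpdef]; field_simp, Real.rpow_one]
      have h2 : ((x t j - x t i) ^ 2 : ℝ) ^ p = |x t j - x t i| ^ (1 + α) := by
        rw [← sq_abs, ← Real.rpow_natCast |x t j - x t i| 2, ← Real.rpow_mul (abs_nonneg _)]
        congr 1
        rw [hpdef]; push_cast; ring
      rw [h1, h2]
    have hQ : (∑ i, ∑ j, B i j * (x t j - x t i) ^ 2) ^ p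
        ≤ ∑ i, ∑ j, A i j * |x t j - x t i| ^ (1 + α) := by
      have h := aux_sum_rpow (Finset.univ : Finset (Fin n × Fin n))
        (fun ij => B ij.1 ij.2 * (x t ij.2 - x t ij.1) ^ 2)
        (fun ij _ => mul_nonneg (hBnn _ _) (sq_nonneg _)) hp0 hp1
      simp only [Fintype.sum_prod_type] at h
      calc (∑ i, ∑ j, B i j * (x t j - x t i) ^ 2) ^ p
          ≤ ∑ i, ∑ j, (B i j * (x t j - x t i) ^ 2) ^ p := h
        _ = ∑ i, ∑ j, A i j * |x t j - x t i| ^ (1 + α) :=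
          Finset.sum_congr rfl fun i _ => Finset.sum_congr rfl fun j _ => hq1 i j
    have hVt : ∑ i, (x t i - κ) ^ 2 = 2 * V2 t := by rw [hV2]; ring
    have hfied : lam * (∑ i, (x t i - κ) ^ 2)
        ≤ (fun i => x t i - κ) ⬝ᵥ (graphLaplacian B *ᵥ (fun i => x t i - κ)) :=
      fiedler hn1 B μ T hT hdiagz hmono hmu2 (fun i => x t i - κ) (hδ0 t)
    have hlap : ∑ i, ∑ j, B i j * ((x t j - κ) - (x t i - κ)) ^ 2
        = 2 * ((fun i => x t i - κ) ⬝ᵥ (graphLaplacian B *ᵥ (fun i => x t i - κ))) :=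
      lap_quad B hBsymm hBdiag (fun i => x t i - κ)
    have hlb : 2 * (lam * (2 * V2 t)) ≤ ∑ i, ∑ j, B i j * (x t j - x t i) ^ 2 := by
      have he : ∑ i, ∑ j, B i j * (x t j - x t i) ^ 2
          = ∑ i, ∑ j, B i j * ((x t j - κ) - (x t i - κ)) ^ 2 :=
        Finset.sum_congr rfl fun i _ => Finset.sum_congr rfl fun j _ => by ring_nf
      rw [he, hlap]
      rw [hVt] at hfied
      linarith
    have hVnn : 0 ≤ V2 t := by rw [hV2]; positivity
    have hlp : 0 < lam ^ p := Real.rpow_pos_of_pos hlampos p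
    have h5 : (2 * (lam * (2 * V2 t))) ^ p ≤ (∑ i, ∑ j, B i j * (x t j - x t i) ^ 2) ^ p := by
      apply Real.rpow_le_rpow _ hlb hp0.le
      have := hlampos
      positivity
    have h6 : (2 * (lam * (2 * V2 t))) ^ p = 2 * 2 ^ α * (lam ^ p * V2 t ^ p) := by
      rw [show (2:ℝ) * (lam * (2 * V2 t)) = (2*2) * (lam * V2 t) by ring,
        Real.mul_rpow (by norm_num) (mul_nonneg hlampos.le hVnn),
        Real.mul_rpow hlampos.le hVnn]
      have h44 : ((2:ℝ)*2) ^ p = 2 * 2 ^ α := by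
        rw [Real.mul_rpow (by norm_num) (by norm_num), ← Real.rpow_add (by norm_num : (0:ℝ)<2),
          show p + p = 1 + α by rw [hpdef]; ring,
          Real.rpow_add (by norm_num : (0:ℝ)<2), Real.rpow_one]
      rw [h44]
    have h7 : 2 * (2 ^ α * (lam ^ p * V2 t ^ p)) ≤ ∑ i, ∑ j, A i j * |x t j - x t i| ^ (1+α) := by
      calc 2 * (2 ^ α * (lam ^ p * V2 t ^ p)) = (2 * (lam * (2 * V2 t))) ^ p := by rw [h6]; ring
        _ ≤ _ := le_trans h5 hQ
    have heq : -(2 ^ α * lam ^ p) * V2 t ^ p = -(2 ^ α * (lam ^ p * V2 t ^ p)) := by ring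
    rw [heq]
    linarith
  have hderiv_nonpos : ∀ s : ℝ, deriv V2 s ≤ 0 := by
    intro s
    rw [(hVd s).deriv, hsymmId s]
    have hpos : 0 ≤ ∑ i, ∑ j, A i j * |x s j - x s i| ^ (1 + α) :=
      Finset.sum_nonneg fun i _ => Finset.sum_nonneg fun j _ =>
        mul_nonneg (hnonneg i j) (Real.rpow_nonneg (abs_nonneg _) _)
    linarith
  constructor
  · exact fun t _ => hmain t
  · intro t ht
    have ht' : 2 ^ (1 - α) * V2 0 ^ q / ((1 - α) * lam ^ p) ≤ t := ht
    have hVnn : ∀ s : ℝ, 0 ≤ V2 s := fun s => by rw [hV2]; positivity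
    have hVdiff : Differentiable ℝ V2 := fun s => (hVd s).differentiableAt
    have hanti : Antitone V2 := antitone_of_deriv_nonpos hVdiff hderiv_nonpos
    have h1ma : (0:ℝ) < 1 - α := by linarith
    have hlp : 0 < lam ^ p := Real.rpow_pos_of_pos hlampos p
    have hT0 : 0 ≤ 2 ^ (1 - α) * V2 0 ^ q / ((1 - α) * lam ^ p) := by
      apply div_nonneg
      · exact mul_nonneg (Real.rpow_nonneg (by norm_num) _) (Real.rpow_nonneg (hVnn 0) _)
      · exact mul_nonneg h1ma.le hlp.le
    have ht0 : 0 ≤ t := le_trans hT0 ht'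
    have hV2t0 : V2 t = 0 := by
      by_contra hne
      have hpos : 0 < V2 t := lt_of_le_of_ne (hVnn t) (Ne.symm hne)
      have hposIcc : ∀ s ∈ Set.Icc (0:ℝ) t, 0 < V2 s := fun s hs =>
        lt_of_lt_of_le hpos (hanti hs.2)
      have hK : (0:ℝ) < 2 ^ α * lam ^ p * q :=
        mul_pos (mul_pos (Real.rpow_pos_of_pos (by norm_num) α) hlp) hq0
      have hganti : AntitoneOn (fun s => V2 s ^ q + (2 ^ α * lam ^ p * q) * s)
          (Set.Icc 0 t) := by
        apply antitoneOn_of_deriv_nonpos (convex_Icc 0 t)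
        · apply ContinuousOn.add
          · exact (hVdiff.continuous.continuousOn).rpow_const (fun s _ => Or.inr hq0.le)
          · exact (continuous_const.mul continuous_id).continuousOn
        · rw [interior_Icc]
          intro s hs
          have hVs : V2 s ≠ 0 := (hposIcc s (Set.mem_Icc_of_Ioo hs)).ne'
          apply DifferentiableAt.differentiableWithinAt
          exact ((hVdiff s).rpow_const (Or.inl hVs)).add (differentiableAt_id.const_mul _)
        · rw [interior_Icc]
          intro s hs
          have hVs : 0 < V2 s := hposIcc s (Set.mem_Icc_of_Ioo hs)
          have hW : HasDerivAt (fun u => V2 u ^ q) (deriv V2 s * q * V2 s ^ (q-1)) s :=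
            (hVdiff s).hasDerivAt.rpow_const (Or.inl hVs.ne')
          have hlin : HasDerivAt (fun u : ℝ => (2 ^ α * lam ^ p * q) * u)
              (2 ^ α * lam ^ p * q) s := by
            simpa using (hasDerivAt_id s).const_mul (2 ^ α * lam ^ p * q)
          have hgd := hW.fun_add hlin
          rw [hgd.deriv]
          have h1 := hmain s
          have h2 : 0 < V2 s ^ (q-1) := Real.rpow_pos_of_pos hVs _
          have h3 : V2 s ^ p * V2 s ^ (q-1) = 1 := by
            rw [← Real.rpow_add hVs, show p + (q-1) = 0 by rw [hpdef, hqdef]; ring,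
              Real.rpow_zero]
          have h4 : deriv V2 s * V2 s ^ (q-1) ≤ -(2^α * lam^p) := by
            calc deriv V2 s * V2 s ^ (q-1) ≤ (-(2^α * lam^p) * V2 s ^ p) * V2 s ^ (q-1) :=
                mul_le_mul_of_nonneg_right h1 h2.le
              _ = -(2^α * lam^p) * (V2 s ^ p * V2 s ^ (q-1)) := by ring
              _ = -(2^α * lam^p) := by rw [h3, mul_one]
          have h5 := mul_le_mul_of_nonneg_right h4 hq0.le
          linarith
      have hg0 := hganti (Set.left_mem_Icc.2 ht0) (Set.right_mem_Icc.2 ht0) ht0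
      simp only at hg0
      have hne2 : lam ^ p ≠ 0 := hlp.ne'
      have hne1 : ((1:ℝ) - α) ≠ 0 := h1ma.ne'
      have h2a : (2:ℝ) ^ α * 2 ^ (1-α) = 2 := by
        rw [← Real.rpow_add (by norm_num : (0:ℝ) < 2), show α + (1-α) = 1 by ring,
          Real.rpow_one]
      have hKT : 2 ^ α * lam ^ p * q * (2 ^ (1-α) * V2 0 ^ q / ((1-α) * lam ^ p))
          = V2 0 ^ q := by
        rw [div_eq_mul_inv, mul_inv]
        calc 2^α * lam^p * q * (2^(1-α) * V2 0 ^ q * ((1-α)⁻¹ * (lam^p)⁻¹))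
            = (2^α * 2^(1-α)) * (lam^p * (lam^p)⁻¹) * (q * (1-α)⁻¹) * V2 0 ^ q := by ring
          _ = V2 0 ^ q := by
              rw [h2a, mul_inv_cancel₀ hne2,
                show q * (1-α)⁻¹ = (1/2) * ((1-α) * (1-α)⁻¹) by rw [hqdef]; ring,
                mul_inv_cancel₀ hne1]
              ring
      have hKt : V2 0 ^ q ≤ 2 ^ α * lam ^ p * q * t := by
        calc V2 0 ^ q = 2 ^ α * lam ^ p * q * (2^(1-α) * V2 0 ^ q / ((1-α) * lam^p)) :=
            hKT.symm
          _ ≤ 2 ^ α * lam ^ p * q * t := mul_le_mul_of_nonneg_left ht' hK.le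
      have hWt : 0 < V2 t ^ q := Real.rpow_pos_of_pos hpos q
      linarith
    refine ⟨hV2t0, fun i => ?_⟩
    have hsum0 : ∑ j, (x t j - κ) ^ 2 = 0 := by
      have h := hV2t0
      rw [hV2] at h
      simp only at h
      linarith
    have h := (Finset.sum_eq_zero_iff_of_nonneg
      (fun j _ => sq_nonneg (x t j - κ))).1 hsum0 i (Finset.mem_univ i)
    have h2 : x t i - κ = 0 := by
      have := sq_eq_zero_iff.1 h
      linarith [this]
    linarith
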